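/- Let A : [0,∞) → [0,∞) be an aggregation function such that its super-additive transformation A* is finite-valued and strictly convex. Then A(x) = A*(x) for every x ∈ [0,∞). -/

import Mathlib

/-- If `A : [0,∞) → [0,∞)` is an aggregation function whose super-additive
transformation `A*` is finite-valued (here: real-valued, given by an `IsLUB`) and strictly
convex, then `A = A*` on `[0,∞)`. -/
theorem eq_superTransform_of_strictConvex
    (A Astar : ℝ → ℝ)
    (hA0 : A 0 = 0) (hAnonneg : ∀ x, 0 ≤ x → 0 ≤ A x) (hmono : MonotoneOn A (Set.Ici 0))
    (hstar : ∀ x, 0 ≤ x →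
      IsLUB {s : ℝ | ∃ (k : ℕ) (c : Fin k → ℝ), 1 ≤ k ∧ (∀ j, 0 ≤ c j) ∧
        (∑ j, c j) ≤ x ∧ s = ∑ j, A (c j)} (Astar x))
    (hconv : StrictConvexOn ℝ (Set.Ici 0) Astar) :
    ∀ x, 0 ≤ x → A x = Astar x := by
  -- A ≤ Astar on [0,∞)
  have hAle : ∀ t, 0 ≤ t → A t ≤ Astar t := by
    intro t ht
    exact (hstar t ht).1 ⟨1, fun _ => t, le_refl 1, fun _ => ht, by simp, by simp⟩
  -- Astar 0 = 0
  have hAs0 : Astar 0 = 0 := by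
    have h := hstar 0 le_rfl
    have h1 : Astar 0 ≤ 0 := by
      apply h.2
      rintro s ⟨k, c, hk, hc0, hcsum, rfl⟩
      have hz : ∀ j, c j = 0 := by
        intro j
        have hle : c j ≤ ∑ i, c i :=
          Finset.single_le_sum (fun i _ => hc0 i) (Finset.mem_univ j)
        linarith [hc0 j]
      have : ∀ j : Fin k, A (c j) = 0 := fun j => by rw [hz j, hA0]
      simp [this]
    have h2 : (0:ℝ) ≤ Astar 0 := by
      have := hAle 0 le_rfl
      linarith [hA0 ▸ this]
    linarith
  -- linear bound from convexity
  have hlin : ∀ s t : ℝ, 0 < s → 0 ≤ t → t ≤ s → Astar t ≤ (t / s) * Astar s := by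
    intro s t hs ht hts
    have hs0 : s ≠ 0 := ne_of_gt hs
    have key := hconv.convexOn.2 (Set.mem_Ici.mpr (le_refl 0 : (0:ℝ) ≤ 0))
      (Set.mem_Ici.mpr hs.le)
      (show (0:ℝ) ≤ 1 - t / s from sub_nonneg.mpr ((div_le_one hs).mpr hts))
      (show (0:ℝ) ≤ t / s from by positivity) (by ring)
    have heq : (1 - t / s) • (0:ℝ) + (t / s) • s = t := by
      simp only [smul_eq_mul]; field_simp; ring
    rw [heq] at key
    simpa [hAs0] using key
  -- strict bound
  have hstrict : ∀ x y : ℝ, 0 < y → y < x → Astar y < (y / x) * Astar x := by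
    intro x y hy hyx
    have hx : (0:ℝ) < x := lt_trans hy hyx
    have key := hconv.2 (Set.mem_Ici.mpr (le_refl 0 : (0:ℝ) ≤ 0))
      (Set.mem_Ici.mpr hx.le) (ne_of_lt hx)
      (show (0:ℝ) < 1 - y / x from sub_pos.mpr ((div_lt_one hx).mpr hyx))
      (show (0:ℝ) < y / x from by positivity) (by ring)
    have heq : (1 - y / x) • (0:ℝ) + (y / x) • x = y := by
      simp only [smul_eq_mul]; field_simp; ring
    rw [heq] at key
    simpa [hAs0] using key
  intro x hx
  rcases eq_or_lt_of_le hx with hx0 | hxpos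
  · rw [← hx0, hA0, hAs0]
  by_contra hne
  have hlt : A x < Astar x := lt_of_le_of_ne (hAle x hx) hne
  set g : ℝ := Astar x - A x with hg
  have hgpos : 0 < g := by simp [hg]; linarith
  have hAspos : 0 < Astar x := lt_of_le_of_lt (hAnonneg x hx) hlt
  set δ : ℝ := min (x / 2) (g * x / (2 * Astar x)) with hδ
  have hδpos : 0 < δ := lt_min (by linarith) (by positivity)
  have hδlt : δ < x := lt_of_le_of_lt (min_le_left _ _) (by linarith)
  have hxδ : 0 < x - δ := by linarith
  have hδA : δ * Astar x ≤ g * x / 2 := by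
    have h1 : δ ≤ g * x / (2 * Astar x) := min_le_right _ _
    have := mul_le_mul_of_nonneg_right h1 hAspos.le
    calc δ * Astar x ≤ g * x / (2 * Astar x) * Astar x := this
      _ = g * x / 2 := by field_simp
  set M : ℝ := max (Astar x - g / 2) (x / (x - δ) * Astar (x - δ)) with hM
  -- M is an upper bound of the defining set
  have hub : Astar x ≤ M := by
    apply (hstar x hx).2
    rintro s ⟨k, c, hk, hc0, hcsum, rfl⟩
    have hcle : ∀ j, c j ≤ x := by
      intro j
      have : c j ≤ ∑ i, c i :=
        Finset.single_le_sum (fun i _ => hc0 i) (Finset.mem_univ j)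
      linarith
    by_cases hcase : ∃ i, x - δ < c i
    · -- one big part
      obtain ⟨i, hi⟩ := hcase
      have hsplit : ∑ j, A (c j) = A (c i) + ∑ j ∈ Finset.univ.erase i, A (c j) :=
        (Finset.add_sum_erase Finset.univ (fun j => A (c j)) (Finset.mem_univ i)).symm
      have h1 : A (c i) ≤ A x := hmono (Set.mem_Ici.mpr (hc0 i)) (Set.mem_Ici.mpr hx) (hcle i)
      have h2 : ∑ j ∈ Finset.univ.erase i, A (c j)
          ≤ ∑ j ∈ Finset.univ.erase i, (c j / x) * Astar x := by
        apply Finset.sum_le_sum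
        intro j _
        exact le_trans (hAle (c j) (hc0 j)) (hlin x (c j) hxpos (hc0 j) (hcle j))
      have h3 : ∑ j ∈ Finset.univ.erase i, (c j / x) * Astar x
          = (∑ j ∈ Finset.univ.erase i, c j) / x * Astar x := by
        rw [Finset.sum_div, Finset.sum_mul]
      have h4 : ∑ j ∈ Finset.univ.erase i, c j ≤ δ := by
        have := Finset.add_sum_erase Finset.univ c (Finset.mem_univ i)
        have hsum : c i + ∑ j ∈ Finset.univ.erase i, c j ≤ x := by
          rw [this]; exact hcsum
        linarith
      have h5 : (∑ j ∈ Finset.univ.erase i, c j) / x * Astar x ≤ δ / x * Astar x := by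
        apply mul_le_mul_of_nonneg_right _ hAspos.le
        gcongr
      have h6 : δ / x * Astar x ≤ g / 2 := by
        rw [div_mul_eq_mul_div, div_le_iff₀ hxpos] at *
        nlinarith
      have : ∑ j, A (c j) ≤ A x + g / 2 := by
        rw [hsplit]; linarith
      have : ∑ j, A (c j) ≤ Astar x - g / 2 := by
        simp only [hg] at *; linarith
      exact le_trans this (le_max_left _ _)
    · -- all parts small
      push_neg at hcase
      have h2 : ∑ j, A (c j) ≤ ∑ j, (c j / (x - δ)) * Astar (x - δ) := by
        apply Finset.sum_le_sum
        intro j _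
        exact le_trans (hAle (c j) (hc0 j)) (hlin (x - δ) (c j) hxδ (hc0 j) (hcase j))
      have h3 : ∑ j, (c j / (x - δ)) * Astar (x - δ)
          = (∑ j, c j) / (x - δ) * Astar (x - δ) := by
        rw [Finset.sum_div, Finset.sum_mul]
      have hAsnn : 0 ≤ Astar (x - δ) :=
        le_trans (hAnonneg _ hxδ.le) (hAle _ hxδ.le)
      have h4 : (∑ j, c j) / (x - δ) * Astar (x - δ) ≤ x / (x - δ) * Astar (x - δ) := by
        apply mul_le_mul_of_nonneg_right _ hAsnn
        gcongr
      have : ∑ j, A (c j) ≤ x / (x - δ) * Astar (x - δ) := by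
        rw [h3] at h2; linarith
      exact le_trans this (le_max_right _ _)
  -- but M < Astar x
  have hMlt : M < Astar x := by
    apply max_lt
    · linarith
    · have h := hstrict x (x - δ) hxδ (by linarith)
      have hxne : (x:ℝ) ≠ 0 := ne_of_gt hxpos
      have hxδne : x - δ ≠ 0 := ne_of_gt hxδ
      calc x / (x - δ) * Astar (x - δ) < x / (x - δ) * ((x - δ) / x * Astar x) := by
            apply mul_lt_mul_of_pos_left h (by positivity)
        _ = Astar x := by field_simp
  linarith
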